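/- Let x = (a_1,...,a_n) and z = (c_1,...,c_n) be rook-monoid sequences that agree at all positions except i < r, where c_i = a_r, c_r = a_i, and a_r > a_i. Then x <_D z strictly in the Deodhar order. -/

import Mathlib

/-- coinv: number of pairs i < j with 0 < a i < a j. -/
def coinv (n : ℕ) (a : Fin n → ℕ) : ℕ :=
  (Finset.univ.filter (fun p : Fin n × Fin n => p.1 < p.2 ∧ 0 < a p.1 ∧ a p.1 < a p.2)).card

/-- Length of a rook-monoid sequence: ∑_{i : a_i ≠ 0} (a_i + n - i) - coinv (1-based i). -/
def rookLen (n : ℕ) (a : Fin n → ℕ) : ℤ :=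
  (∑ i : Fin n, if a i ≠ 0 then ((a i : ℤ) + n - (i.val + 1)) else 0) - coinv n a

/-- A rook-monoid sequence: entries in {0,...,n} with distinct nonzero entries. -/
def IsRook (n : ℕ) (a : Fin n → ℕ) : Prop :=
  (∀ i, a i ≤ n) ∧ ∀ i j : Fin n, i ≠ j → a i ≠ 0 → a i ≠ a j

/-- Non-increasing rearrangement of a list. -/
def sortDesc (l : List ℕ) : List ℕ := l.insertionSort (· ≥ ·)

/-- Containment order: entrywise comparison of non-increasing rearrangements. -/
def contLE (l m : List ℕ) : Prop := List.Forall₂ (· ≤ ·) (sortDesc l) (sortDesc m)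

/-- Deodhar order: containment of all truncations. -/
def deodharLE (n : ℕ) (x y : Fin n → ℕ) : Prop :=
  ∀ k : ℕ, k ≤ n → contLE ((List.ofFn x).take k) ((List.ofFn y).take k)

lemma sortDesc_eq_of_perm {l m : List ℕ} (h : l.Perm m) : sortDesc l = sortDesc m := by
  refine List.Perm.eq_of_pairwise' (List.pairwise_insertionSort _ l)
    (List.pairwise_insertionSort _ m) ?_
  exact ((List.perm_insertionSort _ l).trans h).trans (List.perm_insertionSort _ m).symm

lemma contLE_refl (l : List ℕ) : contLE l l :=
  List.forall₂_same.2 fun _ _ => le_rfl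

lemma forall2_orderedInsert_cons (x : ℕ) (s : List ℕ) : ∀ (a : ℕ), x ≤ a →
    (∀ b ∈ s, b ≤ a) → s.Pairwise (· ≥ ·) →
    List.Forall₂ (· ≤ ·) (s.orderedInsert (· ≥ ·) x) (a :: s) := by
  induction s with
  | nil => exact fun a hx _ _ => List.Forall₂.cons hx List.Forall₂.nil
  | cons b s' ih =>
    intro a hx hs hsort
    rw [List.orderedInsert]
    by_cases hb : x ≥ b
    · simp only [hb, if_true]
      exact List.Forall₂.cons hx (List.forall₂_same.2 fun _ _ => le_rfl)
    · simp only [hb, if_false]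
      refine List.Forall₂.cons (hs b (by simp)) ?_
      exact ih b (le_of_lt (not_le.mp hb)) (fun c hc => (List.pairwise_cons.mp hsort).1 c hc)
        (List.pairwise_cons.mp hsort).2

lemma forall2_orderedInsert (x y : ℕ) (hxy : x ≤ y) (s : List ℕ) (hs : s.Pairwise (· ≥ ·)) :
    List.Forall₂ (· ≤ ·) (s.orderedInsert (· ≥ ·) x) (s.orderedInsert (· ≥ ·) y) := by
  induction s with
  | nil => exact List.Forall₂.cons hxy List.Forall₂.nil
  | cons a s' ih =>
    rw [List.orderedInsert, List.orderedInsert]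
    by_cases hx : x ≥ a
    · have hy : y ≥ a := le_trans hx hxy
      simp only [hx, hy, if_true]
      exact List.Forall₂.cons hxy (List.forall₂_same.2 fun _ _ => le_rfl)
    · by_cases hy : y ≥ a
      · have hxa : x < a := not_le.mp hx
        simp only [hx, hy, if_true, if_false]
        refine List.Forall₂.cons hy ?_
        exact forall2_orderedInsert_cons x s' a (le_of_lt hxa)
          (fun b hb => (List.pairwise_cons.mp hs).1 b hb) (List.pairwise_cons.mp hs).2
      · simp only [hx, hy, if_false]
        exact List.Forall₂.cons le_rfl (ih (List.pairwise_cons.mp hs).2)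

lemma contLE_cons {x y : ℕ} (hxy : x ≤ y) (C : List ℕ) : contLE (x :: C) (y :: C) := by
  unfold contLE sortDesc
  rw [List.insertionSort_cons, List.insertionSort_cons]
  exact forall2_orderedInsert x y hxy _ (List.pairwise_insertionSort _ C)

lemma contLE_middle {x y : ℕ} (hxy : x ≤ y) (T D : List ℕ) :
    contLE (T ++ x :: D) (T ++ y :: D) := by
  unfold contLE
  rw [sortDesc_eq_of_perm (List.perm_middle (a := x)),
      sortDesc_eq_of_perm (List.perm_middle (a := y))]
  exact contLE_cons hxy (T ++ D)

lemma list_decomp {α : Type*} (l : List α) (j : ℕ) (h : j < l.length) :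
    l = l.take j ++ l[j] :: l.drop (j + 1) := by
  rw [List.getElem_cons_drop h, List.take_append_drop]

theorem swap_increases_deodhar (n : ℕ) (a c : Fin n → ℕ) (ha : IsRook n a)
    (hc : IsRook n c) (i r : Fin n) (hir : i < r) (h1 : c i = a r) (h2 : c r = a i)
    (h3 : ∀ k, k ≠ i → k ≠ r → c k = a k) (hlt : a i < a r) :
    deodharLE n a c ∧ a ≠ c := by
  have hirv : i.val < r.val := hir
  constructor
  · intro k hk
    set la := (List.ofFn a).take k with hla
    set lc := (List.ofFn c).take k with hlc
    have hlena : la.length = k := by simp [hla, hk]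
    have hlenc : lc.length = k := by simp [hlc, hk]
    -- generic entry computation
    have entry : ∀ (j : ℕ) (hj1 : j < n), j ≠ i.val → j ≠ r.val →
        a ⟨j, hj1⟩ = c ⟨j, hj1⟩ := by
      intro j hj1 hji hjr
      exact (h3 ⟨j, hj1⟩ (Fin.ne_of_val_ne hji) (Fin.ne_of_val_ne hjr)).symm
    by_cases hki : k ≤ i.val
    · -- truncations are equal
      have heq : la = lc := by
        apply List.ext_getElem (by rw [hlena, hlenc])
        intro j hj1 hj2
        rw [hlena] at hj1
        simp only [hla, hlc, List.getElem_take, List.getElem_ofFn]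
        exact entry j (by omega) (by omega) (by omega)
      rw [heq]; exact contLE_refl _
    · push_neg at hki
      have hik : i.val < k := hki
      have hia : i.val < la.length := by rw [hlena]; exact hik
      have hic : i.val < lc.length := by rw [hlenc]; exact hik
      have hgai : la[i.val]'hia = a i := by
        simp only [hla, List.getElem_take, List.getElem_ofFn]
      have hgci : lc[i.val]'hic = c i := by
        simp only [hlc, List.getElem_take, List.getElem_ofFn]
      by_cases hkr : k ≤ r.val
      · -- lists differ in one entry: position i, a i vs a r
        have hT : la.take i.val = lc.take i.val := by
          apply List.ext_getElem (by simp only [List.length_take]; omega)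
          intro j hj1 hj2
          simp only [List.length_take] at hj1
          simp only [hla, hlc, List.getElem_take, List.getElem_ofFn]
          exact entry j (by omega) (by omega) (by omega)
        have hD : la.drop (i.val + 1) = lc.drop (i.val + 1) := by
          apply List.ext_getElem (by simp only [List.length_drop]; omega)
          intro j hj1 hj2
          simp only [List.length_drop] at hj1
          simp only [hla, hlc, List.getElem_drop, List.getElem_take, List.getElem_ofFn]
          exact entry _ (by omega) (by omega) (by omega)
        have e1 : la = la.take i.val ++ a i :: la.drop (i.val + 1) := by
          conv_lhs => rw [list_decomp la i.val hia]
          rw [hgai]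
        have e2 : lc = la.take i.val ++ a r :: la.drop (i.val + 1) := by
          conv_lhs => rw [list_decomp lc i.val hic]
          rw [hgci, h1, ← hT, ← hD]
        have := contLE_middle (le_of_lt hlt) (la.take i.val) (la.drop (i.val + 1))
        rwa [← e1, ← e2] at this
      · -- k > r : the two lists are permutations of each other
        push_neg at hkr
        have hra : r.val < la.length := by rw [hlena]; omega
        have hrc : r.val < lc.length := by rw [hlenc]; omega
        have hgar : la[r.val]'hra = a r := by
          simp only [hla, List.getElem_take, List.getElem_ofFn]
        have hgcr : lc[r.val]'hrc = c r := by
          simp only [hlc, List.getElem_take, List.getElem_ofFn]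
        have hia2 : i.val < (la.take r.val).length := by
          simp only [List.length_take]; omega
        have hic2 : i.val < (lc.take r.val).length := by
          simp only [List.length_take]; omega
        -- chunk equalities
        have hT : (la.take r.val).take i.val = (lc.take r.val).take i.val := by
          apply List.ext_getElem (by simp only [List.length_take]; omega)
          intro j hj1 hj2
          simp only [List.length_take] at hj1
          simp only [hla, hlc, List.getElem_take, List.getElem_ofFn]
          exact entry j (by omega) (by omega) (by omega)
        have hM : (la.take r.val).drop (i.val + 1) = (lc.take r.val).drop (i.val + 1) := by
          apply List.ext_getElem (by simp only [List.length_take, List.length_drop]; omega)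
          intro j hj1 hj2
          simp only [List.length_take, List.length_drop] at hj1
          simp only [hla, hlc, List.getElem_drop, List.getElem_take, List.getElem_ofFn]
          exact entry _ (by omega) (by omega) (by omega)
        have hD : la.drop (r.val + 1) = lc.drop (r.val + 1) := by
          apply List.ext_getElem (by simp only [List.length_drop]; omega)
          intro j hj1 hj2
          simp only [List.length_drop] at hj1
          simp only [hla, hlc, List.getElem_drop, List.getElem_take, List.getElem_ofFn]
          exact entry _ (by omega) (by omega) (by omega)
        -- decompositions
        have e1 : la = la.take r.val ++ a r :: la.drop (r.val + 1) := by
          conv_lhs => rw [list_decomp la r.val hra]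
          rw [hgar]
        have e2 : la.take r.val =
            (la.take r.val).take i.val ++ a i :: (la.take r.val).drop (i.val + 1) := by
          conv_lhs => rw [list_decomp (la.take r.val) i.val hia2]
          congr 1
          · rw [List.getElem_take, hgai]
        have e1c : lc = lc.take r.val ++ c r :: lc.drop (r.val + 1) := by
          conv_lhs => rw [list_decomp lc r.val hrc]
          rw [hgcr]
        have e2c : lc.take r.val =
            (lc.take r.val).take i.val ++ c i :: (lc.take r.val).drop (i.val + 1) := by
          conv_lhs => rw [list_decomp (lc.take r.val) i.val hic2]
          congr 1
          · rw [List.getElem_take, hgci]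
        have ela : la = ((la.take r.val).take i.val ++
            a i :: (la.take r.val).drop (i.val + 1)) ++ a r :: la.drop (r.val + 1) := by
          conv_lhs => rw [e1]
          rw [← e2]
        have elc : lc = ((la.take r.val).take i.val ++
            a r :: (la.take r.val).drop (i.val + 1)) ++ a i :: la.drop (r.val + 1) := by
          conv_lhs => rw [e1c]
          rw [e2c, h1, h2, ← hT, ← hM, ← hD]
        set T := (la.take r.val).take i.val
        set M := (la.take r.val).drop (i.val + 1)
        set D := la.drop (r.val + 1)
        have hperm : la.Perm lc := by
          rw [ela, elc]
          have p : (a i :: (M ++ a r :: D)).Perm (a r :: (M ++ a i :: D)) := by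
            refine ((List.Perm.cons _ List.perm_middle).trans ?_).trans
              (List.Perm.cons _ List.perm_middle.symm)
            exact List.Perm.swap (a r) (a i) (M ++ D)
          have := List.Perm.append_left T p
          simpa [List.append_assoc] using this
        unfold contLE
        rw [sortDesc_eq_of_perm hperm]
        exact List.forall₂_same.2 fun _ _ => le_rfl
  · intro h
    have h4 := congrFun h i
    omega
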